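/- For every integer w ≥ 2, the series ∑_{n=1}^∞ 1/((n − 1/w)(n + 1/w)) converges and equals w·(w/2 − (π/2)·cot(π/w)). -/

import Mathlib

open Real

open Filter Topology

set_option maxHeartbeats 1000000



lemma cot_add_pi' (x : ℝ) : Real.cot (x + π) = Real.cot x := by
  rw [Real.cot_eq_cos_div_sin, Real.cot_eq_cos_div_sin, Real.sin_add_pi, Real.cos_add_pi,
    neg_div_neg_eq]

lemma cot_add_pi_div_two' (x : ℝ) : Real.cot (x + π / 2) = - Real.tan x := by
  rw [Real.cot_eq_cos_div_sin, Real.sin_add_pi_div_two, Real.cos_add_pi_div_two,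
    Real.tan_eq_sin_div_cos, neg_div]

lemma cot_add_cot' {A B : ℝ} (hA : Real.sin A ≠ 0) (hB : Real.sin B ≠ 0) :
    Real.cot A + Real.cot B = Real.sin (A + B) / (Real.sin A * Real.sin B) := by
  rw [Real.cot_eq_cos_div_sin, Real.cot_eq_cos_div_sin, Real.sin_add]
  field_simp
  ring

lemma cot_double (φ : ℝ) :
    Real.cot φ + Real.cot (φ + π / 2) = 2 * Real.cot (2 * φ) := by
  rw [Real.cot_eq_cos_div_sin, Real.cot_eq_cos_div_sin, Real.cot_eq_cos_div_sin,
    Real.sin_add_pi_div_two, Real.cos_add_pi_div_two, Real.sin_two_mul, Real.cos_two_mul']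
  by_cases hs : Real.sin φ = 0
  · simp [hs]
  · by_cases hc : Real.cos φ = 0
    · simp [hc]
    · field_simp
      ring

lemma cot_sum_pow_two (m : ℕ) (θ : ℝ) :
    ∑ k ∈ Finset.range (2 ^ m), Real.cot (θ + k * (π / 2 ^ m))
      = 2 ^ m * Real.cot (2 ^ m * θ) := by
  induction m generalizing θ with
  | zero => simp
  | succ m ih =>
      have h2 : (2:ℕ) ^ (m+1) = 2 ^ m + 2 ^ m := by ring
      rw [h2, Finset.sum_range_add]
      have e1 : (∑ k ∈ Finset.range (2^m), Real.cot (θ + ((2^m + k : ℕ)) * (π / 2 ^ (m+1))))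
          = ∑ k ∈ Finset.range (2^m), Real.cot ((θ + k * (π / 2 ^ (m+1))) + π / 2) := by
        refine Finset.sum_congr rfl fun k _ => ?_
        congr 1
        push_cast
        field_simp
        ring
      rw [e1, ← Finset.sum_add_distrib]
      have e2 : (∑ k ∈ Finset.range (2^m), (Real.cot (θ + k * (π / 2 ^ (m+1)))
          + Real.cot ((θ + k * (π / 2 ^ (m+1))) + π / 2)))
          = ∑ k ∈ Finset.range (2^m), 2 * Real.cot ((2*θ) + k * (π / 2 ^ m)) := by
        refine Finset.sum_congr rfl fun k _ => ?_
        rw [cot_double]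
        congr 1
        field_simp
        ring
      rw [e2, ← Finset.mul_sum, ih (2*θ)]
      have h3 : (2:ℝ) ^ (m+1) * θ = 2 ^ m * (2 * θ) := by ring
      rw [h3]
      ring

lemma tendsto_mul_cot : Tendsto (fun t : ℝ => t * Real.cot t) (𝓝[≠] 0) (𝓝 1) := by
  have hsin : Tendsto (fun t : ℝ => Real.sin t / t) (𝓝[≠] 0) (𝓝 1) := by
    have h := hasDerivAt_iff_tendsto_slope.mp (Real.hasDerivAt_sin 0)
    simpa [slope_fun_def, Real.sin_zero, Real.cos_zero, div_eq_inv_mul] using h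
  have hcos : Tendsto (fun t : ℝ => Real.cos t) (𝓝[≠] 0) (𝓝 1) := by
    have h : Tendsto Real.cos (𝓝 0) (𝓝 (Real.cos 0)) := Real.continuous_cos.continuousAt
    rw [Real.cos_zero] at h
    exact h.mono_left nhdsWithin_le_nhds
  have key : Tendsto (fun t : ℝ => Real.cos t / (Real.sin t / t)) (𝓝[≠] 0) (𝓝 1) := by
    have h := hcos.div hsin one_ne_zero
    rw [div_one] at h
    exact h
  refine key.congr' ?_
  filter_upwards [self_mem_nhdsWithin] with t ht
  rw [Real.cot_eq_cos_div_sin, div_div_eq_mul_div, mul_comm, mul_div_assoc]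

lemma aux_A {c : ℝ} (hc : c ≠ 0) :
    Tendsto (fun m : ℕ => π / 2 ^ (m+1) * Real.cot (π * c / 2 ^ (m+1))) atTop (𝓝 (1/c)) := by
  have h2 : Tendsto (fun m : ℕ => ((2:ℝ)) ^ (m+1)) atTop atTop :=
    (tendsto_pow_atTop_atTop_of_one_lt (by norm_num : (1:ℝ) < 2)).comp (tendsto_add_atTop_nat 1)
  have ht : Tendsto (fun m : ℕ => π * c / 2 ^ (m+1)) atTop (𝓝 0) :=
    tendsto_const_nhds.div_atTop h2
  have ht' : Tendsto (fun m : ℕ => π * c / 2 ^ (m+1)) atTop (𝓝[≠] 0) := by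
    refine tendsto_nhdsWithin_of_tendsto_nhds_of_eventually_within _ ht ?_
    filter_upwards with m
    exact div_ne_zero (mul_ne_zero Real.pi_ne_zero hc) (by positivity)
  have h3 := tendsto_mul_cot.comp ht'
  have h4 := h3.const_mul (1/c)
  rw [mul_one] at h4
  refine h4.congr fun m => ?_
  simp only [Function.comp_apply]
  field_simp

lemma aux_tan {z : ℝ} :
    Tendsto (fun m : ℕ => π / 2 ^ (m+1) * Real.tan (π * z / 2 ^ (m+1))) atTop (𝓝 0) := by
  have h2 : Tendsto (fun m : ℕ => ((2:ℝ)) ^ (m+1)) atTop atTop :=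
    (tendsto_pow_atTop_atTop_of_one_lt (by norm_num : (1:ℝ) < 2)).comp (tendsto_add_atTop_nat 1)
  have ht : Tendsto (fun m : ℕ => π * z / 2 ^ (m+1)) atTop (𝓝 0) :=
    tendsto_const_nhds.div_atTop h2
  have hpi : Tendsto (fun m : ℕ => π / 2 ^ (m+1)) atTop (𝓝 0) :=
    tendsto_const_nhds.div_atTop h2
  have htan : Tendsto (fun m : ℕ => Real.tan (π * z / 2 ^ (m+1))) atTop (𝓝 0) := by
    have hc : ContinuousAt Real.tan 0 :=
      Real.continuousAt_tan.mpr (by rw [Real.cos_zero]; norm_num)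
    have := hc.tendsto.comp ht
    rw [Real.tan_zero] at this
    exact this
  simpa using hpi.mul htan

lemma key_sum (z : ℝ) (m : ℕ) :
    π * Real.cot (π * z)
      = π / 2 ^ (m+1) * Real.cot (π * z / 2 ^ (m+1))
        - π / 2 ^ (m+1) * Real.tan (π * z / 2 ^ (m+1))
        + ∑ j ∈ Finset.range (2 ^ m - 1),
            (π / 2 ^ (m+1) * (Real.cot (π * (z + ((j:ℝ)+1)) / 2 ^ (m+1))
              + Real.cot (π * (z - ((j:ℝ)+1)) / 2 ^ (m+1)))) := by
  have hM : ((2:ℝ)) ^ (m+1) ≠ 0 := by positivity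
  set a : ℕ → ℝ := fun k => Real.cot (π * (z + (k:ℝ)) / 2 ^ (m+1)) with ha
  have L2 := cot_sum_pow_two (m+1) (π * z / 2 ^ (m+1))
  have hcancel : (2:ℝ) ^ (m+1) * (π * z / 2 ^ (m+1)) = π * z := by field_simp
  rw [hcancel] at L2
  have harg : ∀ k : ℕ, π * z / 2 ^ (m+1) + (k:ℝ) * (π / 2 ^ (m+1))
      = π * (z + (k:ℝ)) / 2 ^ (m+1) := by intro k; ring
  have L2' : ∑ k ∈ Finset.range (2 ^ (m+1)), a k = 2 ^ (m+1) * Real.cot (π * z) := by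
    rw [← L2]
    refine (Finset.sum_congr rfl fun k _ => ?_).symm
    rw [ha]; simp only []; rw [harg k]
  -- split the sum
  have n1 : (1:ℕ) ≤ 2 ^ m := Nat.one_le_two_pow
  have hLn : (2:ℕ) ^ m = (2 ^ m - 1) + 1 := (Nat.succ_pred_eq_of_pos n1).symm
  have h2m1 : (2:ℕ) ^ (m+1) = 2 ^ m + 2 ^ m := by ring
  set n : ℕ := 2 ^ m - 1 with hn
  have s1 : ∑ k ∈ Finset.range (2 ^ (m+1)), a k
      = ∑ k ∈ Finset.range (2 ^ m), a k + ∑ k ∈ Finset.range (2 ^ m), a (2 ^ m + k) := by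
    rw [h2m1, Finset.sum_range_add]
  have split : ∀ f : ℕ → ℝ, ∑ k ∈ Finset.range (2 ^ m), f k
      = (∑ j ∈ Finset.range n, f (j+1)) + f 0 := by
    intro f
    rw [hLn]
    exact Finset.sum_range_succ' f n
  have s2 := split a
  have s3 := split (fun k => a (2 ^ m + k))
  have s4 : ∑ j ∈ Finset.range n, a (2 ^ m + (j+1))
      = ∑ j ∈ Finset.range n, a (2 ^ (m+1) - (j+1)) := by
    rw [← Finset.sum_range_reflect (fun j => a (2 ^ m + (j+1))) n]
    refine Finset.sum_congr rfl fun j hj => ?_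
    have hj' : j < n := Finset.mem_range.mp hj
    exact congrArg a (by rw [h2m1, hLn]; omega)
  have s5 : ∀ j ∈ Finset.range n, a (2 ^ (m+1) - (j+1))
      = Real.cot (π * (z - ((j:ℝ)+1)) / 2 ^ (m+1)) := by
    intro j hj
    have hj' : j < n := Finset.mem_range.mp hj
    have hle : j + 1 ≤ 2 ^ (m+1) := by rw [h2m1, hLn]; omega
    have hcast : (((2 ^ (m+1) - (j+1) : ℕ)) : ℝ) = 2 ^ (m+1) - ((j:ℝ)+1) := by
      push_cast [Nat.cast_sub hle]
      ring
    rw [ha]; simp only []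
    rw [hcast]
    have hargeq : π * (z + (2 ^ (m+1) - ((j:ℝ)+1))) / 2 ^ (m+1)
        = π * (z - ((j:ℝ)+1)) / 2 ^ (m+1) + π := by
      field_simp
      ring
    rw [hargeq, cot_add_pi']
  have s6 : a (2 ^ m + 0) = - Real.tan (π * z / 2 ^ (m+1)) := by
    rw [ha]; simp only []
    have : π * (z + ((2 ^ m + 0 : ℕ) : ℝ)) / 2 ^ (m+1) = π * z / 2 ^ (m+1) + π / 2 := by
      push_cast
      rw [pow_succ]
      field_simp
      ring
    rw [this, cot_add_pi_div_two']
  have s7 : a 0 = Real.cot (π * z / 2 ^ (m+1)) := by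
    rw [ha]; norm_num
  have hsum : ∑ k ∈ Finset.range (2 ^ (m+1)), a k
      = Real.cot (π * z / 2 ^ (m+1)) - Real.tan (π * z / 2 ^ (m+1))
        + ∑ j ∈ Finset.range n,
            (a (j+1) + Real.cot (π * (z - ((j:ℝ)+1)) / 2 ^ (m+1))) := by
    rw [s1, s2, s3, s4, Finset.sum_congr rfl s5, s6, s7, Finset.sum_add_distrib]
    ring
  have hfin : π * Real.cot (π * z) = π / 2 ^ (m+1) * ∑ k ∈ Finset.range (2 ^ (m+1)), a k := by
    rw [L2']
    field_simp
  rw [hfin, hsum, mul_add, mul_sub, Finset.mul_sum]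
  congr 1
  refine Finset.sum_congr rfl fun j hj => ?_
  rw [ha]
  push_cast
  ring_nf


lemma cot_neg' (x : ℝ) : Real.cot (-x) = - Real.cot x := by
  rw [Real.cot_eq_cos_div_sin, Real.cot_eq_cos_div_sin, Real.cos_neg, Real.sin_neg, div_neg]

lemma Fbound {z : ℝ} (hz0 : 0 < z) (hz2 : z ≤ 1/2) (m j : ℕ) (hcase : j < 2^m - 1) :
    ‖π / 2 ^ (m+1) * (Real.cot (π * (z + ((j:ℝ)+1)) / 2 ^ (m+1))
        + Real.cot (π * (z - ((j:ℝ)+1)) / 2 ^ (m+1)))‖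
      ≤ 2 * π^2 * z / (3 * ((j:ℝ)+1)^2) := by
  have n1 : (1:ℕ) ≤ 2 ^ m := Nat.one_le_two_pow
  set M : ℝ := 2 ^ (m+1) with hM
  set k : ℝ := (j:ℝ) + 1 with hk
  have hMpos : 0 < M := by positivity
  have hk1 : (1:ℝ) ≤ k := by rw [hk]; linarith [Nat.cast_nonneg (α := ℝ) j]
  have hkz : k + z ≤ M / 2 := by
    have h1 : (j:ℕ) + 1 ≤ 2 ^ m - 1 := hcase
    have h2 : ((j:ℝ)) + 1 ≤ (2:ℝ) ^ m - 1 := by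
      have h := (Nat.cast_le (α := ℝ)).mpr h1
      rw [Nat.cast_sub n1] at h
      push_cast at h
      exact h
    have h3 : M = 2 * 2 ^ m := by rw [hM, pow_succ]; ring
    rw [h3, hk]
    linarith
  have hkz' : 0 < k - z := by linarith
  set A : ℝ := π * (z + k) / M with hA
  set B : ℝ := π * (k - z) / M with hB
  have hA0 : 0 < A := by rw [hA]; positivity
  have hB0 : 0 < B := by rw [hB]; positivity
  have hA2 : A ≤ π / 2 := by
    rw [hA, div_le_div_iff₀ hMpos two_pos]
    nlinarith [pi_pos]
  have hB2 : B ≤ π / 2 := by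
    rw [hB, div_le_div_iff₀ hMpos two_pos]
    nlinarith [pi_pos]
  have hsinA : 2 / π * A ≤ Real.sin A := Real.mul_le_sin hA0.le hA2
  have hsinB : 2 / π * B ≤ Real.sin B := Real.mul_le_sin hB0.le hB2
  have hsinApos : 0 < Real.sin A := lt_of_lt_of_le (by positivity) hsinA
  have hsinBpos : 0 < Real.sin B := lt_of_lt_of_le (by positivity) hsinB
  -- rewrite the second cotangent
  have hBarg : π * (z - k) / M = -B := by rw [hB]; ring
  have hval : Real.cot A + Real.cot (-B)
      = Real.sin (A + -B) / (Real.sin A * Real.sin (-B)) :=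
    cot_add_cot' hsinApos.ne' (by rw [Real.sin_neg]; exact neg_ne_zero.mpr hsinBpos.ne')
  have hAB : A + -B = 2 * π * z / M := by rw [hA, hB]; ring
  have h2M : (2:ℝ) ≤ M := by
    rw [hM]
    calc (2:ℝ) = 2 ^ 1 := by norm_num
    _ ≤ 2 ^ (m+1) := by
        exact pow_le_pow_right₀ (by norm_num) (by omega)
  have hz2M : 2 * π * z / M ≤ π := by
    rw [div_le_iff₀ hMpos]
    nlinarith [pi_pos]
  have hsinnum : Real.sin (2 * π * z / M) ≤ 2 * π * z / M := Real.sin_le (by positivity)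
  have hsinnum0 : 0 ≤ Real.sin (2 * π * z / M) :=
    Real.sin_nonneg_of_nonneg_of_le_pi (by positivity) hz2M
  have key : π / M * (Real.cot (π * (z + k) / M) + Real.cot (π * (z - k) / M))
      = - (π / M * (Real.sin (2 * π * z / M) / (Real.sin A * Real.sin B))) := by
    rw [hBarg, ← hA, hval, hAB, Real.sin_neg]
    ring
  rw [key, norm_neg, Real.norm_eq_abs, abs_of_nonneg (by positivity)]
  calc π / M * (Real.sin (2 * π * z / M) / (Real.sin A * Real.sin B))
      ≤ π / M * ((2 * π * z / M) / ((2 / π * A) * (2 / π * B))) := by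
        refine mul_le_mul_of_nonneg_left ?_ (by positivity : (0:ℝ) ≤ π/M)
        refine div_le_div₀ (by positivity) hsinnum (by positivity) ?_
        exact mul_le_mul hsinA hsinB (by positivity) hsinApos.le
    _ = π ^ 2 * z / (2 * ((z + k) * (k - z))) := by
        rw [hA, hB, hM]
        have : ((2:ℝ)) ^ (m+1) ≠ 0 := by positivity
        field_simp
    _ ≤ 2 * π ^ 2 * z / (3 * k ^ 2) := by
        rw [div_le_div_iff₀ (by nlinarith) (by positivity)]
        have h4 : 4 * z ^ 2 ≤ k ^ 2 := by nlinarith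
        nlinarith [mul_le_mul_of_nonneg_left h4 (by positivity : (0:ℝ) ≤ π ^ 2 * z)]
lemma hasSum_aux {z : ℝ} (hz0 : 0 < z) (hz2 : z ≤ 1/2) :
    HasSum (fun n : ℕ => 1 / (((n : ℝ) + 1 - z) * ((n : ℝ) + 1 + z)))
      ((-1/(2*z)) * (π * Real.cot (π * z) - 1/z)) := by
  classical
  set g : ℕ → ℝ := fun j => 1/(z + ((j:ℝ)+1)) + 1/(z - ((j:ℝ)+1)) with hg
  set F : ℕ → ℕ → ℝ := fun m j =>
    if j < 2 ^ m - 1 then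
      π / 2 ^ (m+1) * (Real.cot (π * (z + ((j:ℝ)+1)) / 2 ^ (m+1))
        + Real.cot (π * (z - ((j:ℝ)+1)) / 2 ^ (m+1)))
    else 0 with hF
  set bound : ℕ → ℝ := fun j => 2 * π^2 * z / (3 * ((j:ℝ)+1)^2) with hbd
  have hb_sum : Summable bound := by
    have h0 : Summable (fun n : ℕ => 1/(n:ℝ)^2) := summable_one_div_nat_pow.mpr one_lt_two
    have h1 : Summable (fun j : ℕ => 1/((j:ℝ)+1)^2) := by
      have h2 := (summable_nat_add_iff 1).mpr h0
      refine h2.congr fun j => ?_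
      push_cast
      ring
    have h3 := h1.mul_left (2 * π^2 * z / 3)
    refine h3.congr fun j => ?_
    rw [hbd]
    have : ((j:ℝ)+1) ≠ 0 := by positivity
    field_simp
  have hFb : ∀ m j, ‖F m j‖ ≤ bound j := by
    intro m j
    rw [hF, hbd]; simp only []
    by_cases hcase : j < 2 ^ m - 1
    · rw [if_pos hcase]
      exact Fbound hz0 hz2 m j hcase
    · rw [if_neg hcase]
      simp only [norm_zero]
      positivity
  have hFlim : ∀ j : ℕ, Tendsto (fun m => F m j) atTop (𝓝 (g j)) := by
    intro j
    have hjn : (0:ℝ) ≤ (j:ℝ) := Nat.cast_nonneg j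
    have hc1 : z + ((j:ℝ)+1) ≠ 0 := by positivity
    have hc2 : z - ((j:ℝ)+1) ≠ 0 := ne_of_lt (by linarith)
    have h3 := (aux_A hc1).add (aux_A hc2)
    rw [hg]; simp only []
    refine h3.congr' ?_
    filter_upwards [eventually_ge_atTop (j+2)] with m hm
    have hlt : j < 2 ^ m - 1 := by
      have h4 : m < 2 ^ m := Nat.lt_two_pow_self
      omega
    rw [hF]; simp only []; rw [if_pos hlt]
    ring
  have htsum : ∀ m : ℕ, ∑' j, F m j
      = π * Real.cot (π * z) - π / 2^(m+1) * Real.cot (π * z / 2^(m+1))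
        + π / 2^(m+1) * Real.tan (π * z / 2^(m+1)) := by
    intro m
    have h0 : ∀ j ∉ Finset.range (2^m - 1), F m j = 0 := by
      intro j hj
      rw [hF]; simp only []
      rw [if_neg (by simpa using hj)]
    rw [tsum_eq_sum h0]
    have h1 : ∑ j ∈ Finset.range (2^m - 1), F m j
        = ∑ j ∈ Finset.range (2^m - 1),
            (π / 2^(m+1) * (Real.cot (π * (z + ((j:ℝ)+1)) / 2^(m+1))
              + Real.cot (π * (z - ((j:ℝ)+1)) / 2^(m+1)))) := by
      refine Finset.sum_congr rfl fun j hj => ?_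
      rw [hF]; simp only []; rw [if_pos (Finset.mem_range.mp hj)]
    rw [h1]
    have h2 := key_sum z m
    linarith [h2]
  have hT := tendsto_tsum_of_dominated_convergence hb_sum hFlim (Eventually.of_forall hFb)
  have hseq : Tendsto (fun m : ℕ => π * Real.cot (π*z)
      - π/2^(m+1) * Real.cot (π*z/2^(m+1)) + π/2^(m+1) * Real.tan (π*z/2^(m+1)))
      atTop (𝓝 (π * Real.cot (π*z) - 1/z + 0)) := by
    refine Tendsto.add (Tendsto.sub tendsto_const_nhds ?_) aux_tan
    exact aux_A (ne_of_gt hz0)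
  have hgt : ∑' j, g j = π * Real.cot (π*z) - 1/z := by
    have heq : Tendsto (fun m : ℕ => ∑' j, F m j)
        atTop (𝓝 (π * Real.cot (π*z) - 1/z + 0)) :=
      hseq.congr fun m => (htsum m).symm
    have h5 := tendsto_nhds_unique hT heq
    rw [add_zero] at h5
    exact h5
  have hgs : Summable g := by
    refine Summable.of_norm_bounded hb_sum fun j => ?_
    exact le_of_tendsto (hFlim j).norm (Eventually.of_forall fun m => hFb m j)
  have hhs := (hgs.hasSum).mul_left (-1/(2*z))
  rw [hgt] at hhs
  have hfun : (fun n : ℕ => (-1/(2*z)) * g n)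
      = fun n : ℕ => 1 / (((n : ℝ) + 1 - z) * ((n : ℝ) + 1 + z)) := by
    funext n
    have hjn : (0:ℝ) ≤ (n:ℝ) := Nat.cast_nonneg n
    have h1 : (n:ℝ) + 1 - z ≠ 0 := ne_of_gt (by linarith)
    have h2 : (n:ℝ) + 1 + z ≠ 0 := by positivity
    have h3 : z + ((n:ℝ)+1) ≠ 0 := by positivity
    have h4 : z - ((n:ℝ)+1) ≠ 0 := ne_of_lt (by linarith)
    have hz : z ≠ 0 := ne_of_gt hz0
    rw [hg]; simp only []
    field_simp
    ring
  rw [hfun] at hhs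
  exact hhs

theorem zeta2_closed_form (w : ℤ) (hw : 2 ≤ w) :
    HasSum (fun n : ℕ => 1 / ((((n : ℝ) + 1) - 1 / w) * (((n : ℝ) + 1) + 1 / w)))
      ((w : ℝ) * ((w : ℝ) / 2 - (π / 2) * Real.cot (π / w))) := by
  have hw2 : (2:ℝ) ≤ (w:ℝ) := by exact_mod_cast hw
  have hwpos : (0:ℝ) < (w:ℝ) := by linarith
  have hw0 : (w:ℝ) ≠ 0 := ne_of_gt hwpos
  have hz0 : 0 < 1/(w:ℝ) := by positivity
  have hz2 : 1/(w:ℝ) ≤ 1/2 := by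
    apply one_div_le_one_div_of_le two_pos hw2
  have h := hasSum_aux hz0 hz2
  have harg : π * (1/(w:ℝ)) = π / w := by ring
  rw [harg] at h
  have hval : (-1/(2*(1/(w:ℝ)))) * (π * Real.cot (π/w) - 1/(1/(w:ℝ)))
      = (w:ℝ) * ((w:ℝ)/2 - π/2 * Real.cot (π/w)) := by
    field_simp
    ring
  rw [hval] at h
  exact h
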